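/- In the chapter-4 setup, let i ≠ j, let β_i be a bounded measurable function of ξ_i = (z₁,…,z_n, y₁,…,y_{i−1}), and assume E[|β_i(ξ_i)| · ‖s_i(θ)‖ · ‖s_j(θ)‖] < ∞. Then for every bounded measurable function w of ξ_j = (z₁,…,z_n, y₁,…,y_{j−1}), E[ w(ξ_j) · β_i(ξ_i) · s_i(θ) s_j(θ)^T ] = 0 (the zero m×m matrix); equivalently, the conditional expectation of β_i(ξ_i) · s_i(θ) s_j(θ)^T given ξ_j vanishes almost surely. -/

import Mathlib

open MeasureTheory Filter Topology
open scoped BigOperators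

noncomputable section

/-- The sample space of the chapter-4 setup: a tuple `ω = (z, y)` with
`z = (z₁,…,z_n)`, `z_{i+1} ∈ ℝ^{bb i}`, and `y = (y₁,…,y_n)`, `y_{i+1} ∈ ℝ^{aa i}`
(index `i : Fin n` stands for the paper's index `i+1`). -/
abbrev SamplePath (aa bb : ℕ → ℕ) (n : ℕ) :=
  ((i : Fin n) → (Fin (bb i.1) → ℝ)) × ((i : Fin n) → (Fin (aa i.1) → ℝ))

/-- The recursively defined states: `x₀` is fixed and
`x_{i+1} = h_{i+1}(x_i, y_{i+1}, z_{i+1})`, where `h i` is the paper's `h_{i+1}`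
(junk value `0` beyond index `n`). -/
def states (kk aa bb : ℕ → ℕ) (n : ℕ) (x₀ : Fin (kk 0) → ℝ)
    (h : (i : ℕ) → (Fin (kk i) → ℝ) → (Fin (aa i) → ℝ) → (Fin (bb i) → ℝ) →
      (Fin (kk (i + 1)) → ℝ))
    (ω : SamplePath aa bb n) : (i : ℕ) → Fin (kk i) → ℝ
  | 0 => x₀
  | (i + 1) =>
    if hi : i < n then
      h i (states kk aa bb n x₀ h ω i) (ω.2 ⟨i, hi⟩) (ω.1 ⟨i, hi⟩)
    else 0


/-- 1-D Gaussian density. -/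
def g1 (x : ℝ) : ℝ := Real.exp (-x^2) / Real.sqrt Real.pi

lemma g1_pos (x : ℝ) : 0 < g1 x := by
  have := Real.pi_pos
  unfold g1; positivity

lemma g1_meas : Measurable g1 := by
  unfold g1; fun_prop

lemma g1_integrable : Integrable g1 := by
  have h := integrable_exp_neg_mul_sq (b := 1) one_pos
  unfold g1
  simpa [g1, div_eq_mul_inv] using h.mul_const (Real.sqrt Real.pi)⁻¹

lemma g1_integral : ∫ x, g1 x = 1 := by
  unfold g1
  rw [integral_div]
  have h := integral_gaussian 1
  simp only [one_mul, neg_mul] at h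
  have h2 : (fun x : ℝ => Real.exp (-x^2)) = fun x : ℝ => Real.exp (-1*x^2) := by
    funext x; ring_nf
  rw [h]
  norm_num
  exact ne_of_gt (Real.sqrt_pos.mpr Real.pi_pos)

/-- multi-dim Gaussian density -/
def gden (d : ℕ) (y : Fin d → ℝ) : ℝ := ∏ v, g1 (y v)

lemma gden_pos (d : ℕ) (y : Fin d → ℝ) : 0 < gden d y :=
  Finset.prod_pos fun v _ => g1_pos (y v)

lemma gden_meas (d : ℕ) : Measurable (gden d) :=
  Finset.measurable_prod _ fun v _ => g1_meas.comp (measurable_pi_apply v)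

lemma gden_integrable (d : ℕ) : Integrable (gden d) := by
  unfold gden
  exact Integrable.fintype_prod (f := fun _ : Fin d => g1) fun _ => g1_integrable

lemma gden_integral (d : ℕ) : ∫ y, gden d y = 1 := by
  unfold gden
  rw [MeasureTheory.integral_fintype_prod_volume_eq_prod (f := fun _ : Fin d => g1)]
  simp [g1_integral]


lemma lem_integrable_of_integral_eq_one {α : Type*} [MeasurableSpace α] {μ : Measure α}
    {f : α → ℝ} (h1 : ∫ a, f a ∂μ = 1) : Integrable f μ := by
  by_contra hc
  rw [integral_undef hc] at h1
  norm_num at h1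

lemma lintegral_ofReal_eq_one {α : Type*} [MeasurableSpace α] {μ : Measure α}
    {f : α → ℝ} (h0 : ∀ a, 0 ≤ f a) (h1 : ∫ a, f a ∂μ = 1) :
    ∫⁻ a, ENNReal.ofReal (f a) ∂μ = 1 := by
  rw [← ofReal_integral_eq_lintegral_ofReal (lem_integrable_of_integral_eq_one h1)
    (Filter.Eventually.of_forall h0), h1, ENNReal.ofReal_one]

/-- Measurability of a directional derivative in a parameter. -/
lemma measurable_fderiv_apply {α : Type*} [MeasurableSpace α] {m : ℕ}
    (T : α → (Fin m → ℝ) → ℝ) (hT : ∀ θ', Measurable (fun a => T a θ'))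
    (hdiff : ∀ a, Differentiable ℝ (T a)) (θ e : Fin m → ℝ) :
    Measurable (fun a => fderiv ℝ (T a) θ e) := by
  have key : ∀ a, Tendsto (fun q : ℕ => ((q:ℝ)+1) * (T a (θ + ((q:ℝ)+1)⁻¹ • e) - T a θ))
      atTop (𝓝 (fderiv ℝ (T a) θ e)) := by
    intro a
    have h1 : HasFDerivAt (T a) (fderiv ℝ (T a) θ) θ := (hdiff a θ).hasFDerivAt
    have h2 : HasDerivAt (fun s : ℝ => θ + s • e) e 0 := by
      simpa using ((hasDerivAt_id (0:ℝ)).smul_const e).const_add θ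
    have h3 : HasDerivAt (fun s : ℝ => T a (θ + s • e)) (fderiv ℝ (T a) θ e) 0 := by
      have h1' : HasFDerivAt (T a) (fderiv ℝ (T a) θ) ((fun s : ℝ => θ + s • e) 0) := by
        simpa using h1
      have := h1'.comp_hasDerivAt (f := fun s : ℝ => θ + s • e) 0 h2
      exact this
    rw [hasDerivAt_iff_tendsto_slope] at h3
    have h4 : Tendsto (fun q : ℕ => ((q:ℝ)+1)⁻¹) atTop (𝓝[≠] (0:ℝ)) := by
      apply tendsto_nhdsWithin_of_tendsto_nhds_of_eventually_within
      · exact tendsto_one_div_add_atTop_nhds_zero_nat.congr (by simp [one_div])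
      · refine Eventually.of_forall fun q => ?_
        simp only [Set.mem_compl_iff, Set.mem_singleton_iff]
        positivity
    have := h3.comp h4
    refine this.congr fun q => ?_
    simp only [Function.comp_apply, slope_def_field]
    field_simp
    ring_nf
    simp
  exact measurable_of_tendsto_metrizable
    (fun q => ((hT _).sub (hT _)).const_mul _) (tendsto_pi_nhds.mpr key)

-- split lemmas
lemma split_exists (aa bb : ℕ → ℕ) (n : ℕ) (t : Fin n) :
    ∃ (W : Type) (_ : MeasureSpace W), SigmaFinite (volume : Measure W) ∧
      ∃ E : SamplePath aa bb n ≃ᵐ W × (Fin (aa t.1) → ℝ),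
        MeasurePreserving E volume volume ∧
        ∀ w v v', E.symm (w, v) =
          ((E.symm (w, v')).1, Function.update (E.symm (w, v')).2 t v) := by
  classical
  set q : Fin n → Prop := fun l => l.1 = t.1 with hq
  letI : Unique {l : Fin n // q l} := ⟨⟨⟨t, rfl⟩⟩, fun x => Subtype.ext (Fin.ext x.2)⟩
  set Z := (i : Fin n) → (Fin (bb i.1) → ℝ) with hZ
  set π : Fin n → Type := fun l => Fin (aa l.1) → ℝ with hπ
  set V := Fin (aa t.1) → ℝ
  set Ps := (l : {l : Fin n // q l}) → π l.1
  set Pr := (l : {l : Fin n // ¬ q l}) → π l.1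
  let e1 : ((l : Fin n) → π l) ≃ᵐ Ps × Pr :=
    MeasurableEquiv.piEquivPiSubtypeProd π q
  let e2 : Ps ≃ᵐ V := MeasurableEquiv.piUnique (fun l : {l : Fin n // q l} => π l.1)
  let A : SamplePath aa bb n ≃ᵐ Z × (Ps × Pr) := (MeasurableEquiv.refl Z).prodCongr e1
  let B : Z × (Ps × Pr) ≃ᵐ Z × (V × Pr) :=
    (MeasurableEquiv.refl Z).prodCongr (e2.prodCongr (MeasurableEquiv.refl Pr))
  let C : Z × (V × Pr) ≃ᵐ Z × (Pr × V) :=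
    (MeasurableEquiv.refl Z).prodCongr (MeasurableEquiv.prodComm : V × Pr ≃ᵐ Pr × V)
  let D : Z × (Pr × V) ≃ᵐ (Z × Pr) × V := (MeasurableEquiv.prodAssoc).symm
  refine ⟨Z × Pr, inferInstance, inferInstance, ((A.trans B).trans C).trans D, ?_, ?_⟩
  · have mpA : MeasurePreserving A volume volume := by
      have : MeasurePreserving (Prod.map (id : Z → Z) e1) volume volume := by
        rw [show (volume : Measure (SamplePath aa bb n)) = Measure.prod volume volume from rfl,
          show (volume : Measure (Z × (Ps × Pr))) = Measure.prod volume volume from rfl]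
        exact (MeasurePreserving.id volume).prod
          (volume_preserving_piEquivPiSubtypeProd π q)
      exact this
    have mpB : MeasurePreserving B volume volume := by
      have : MeasurePreserving (Prod.map (id : Z → Z)
          (Prod.map e2 (id : Pr → Pr))) volume volume := by
        rw [show (volume : Measure (Z × (Ps × Pr))) = Measure.prod volume volume from rfl,
          show (volume : Measure (Z × (V × Pr))) = Measure.prod volume volume from rfl]
        refine (MeasurePreserving.id volume).prod ?_
        rw [show (volume : Measure (Ps × Pr)) = Measure.prod volume volume from rfl,
          show (volume : Measure (V × Pr)) = Measure.prod volume volume from rfl]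
        exact (volume_preserving_piUnique _).prod (MeasurePreserving.id volume)
      exact this
    have mpC : MeasurePreserving C volume volume := by
      have : MeasurePreserving (Prod.map (id : Z → Z) (Prod.swap : V × Pr → Pr × V))
          volume volume := by
        rw [show (volume : Measure (Z × (V × Pr))) = Measure.prod volume volume from rfl,
          show (volume : Measure (Z × (Pr × V))) = Measure.prod volume volume from rfl]
        refine (MeasurePreserving.id volume).prod ?_
        rw [show (volume : Measure (V × Pr)) = Measure.prod volume volume from rfl,
          show (volume : Measure (Pr × V)) = Measure.prod volume volume from rfl]
        exact Measure.measurePreserving_swap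
      exact this
    have mpD : MeasurePreserving D volume volume := by
      have h := MeasureTheory.measurePreserving_prodAssoc
        (volume : Measure Z) (volume : Measure Pr) (volume : Measure V)
      have := (MeasurePreserving.symm _ h)
      exact this
    exact mpD.comp (mpC.comp (mpB.comp mpA))
  · intro w v v'
    have hsymm : ∀ (w : Z × Pr) (v : V),
        (((A.trans B).trans C).trans D).symm (w, v) = (w.1, e1.symm (e2.symm v, w.2)) :=
      fun w v => rfl
    rw [hsymm, hsymm]
    refine Prod.ext rfl ?_
    funext l
    show e1.symm (e2.symm v, w.2) l = Function.update (e1.symm (e2.symm v', w.2)) t v l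
    by_cases hl : q l
    · have hlt : l = t := Fin.ext hl
      subst hlt
      have h1 : e1.symm (e2.symm v, w.2) l = (e2.symm v) ⟨l, rfl⟩ := by
        show (Equiv.piEquivPiSubtypeProd q π).symm (e2.symm v, w.2) l = _
        rw [Equiv.piEquivPiSubtypeProd_symm_apply]
        exact dif_pos rfl
      rw [h1, Function.update_self]
      show uniqueElim (α := fun l' : {l' : Fin n // q l'} => π l'.1) v ⟨l, rfl⟩ = v
      exact rfl
    · have hne : l ≠ t := fun hh => hl (by rw [hh])
      have h1 : ∀ u : Ps, e1.symm (u, w.2) l = w.2 ⟨l, hl⟩ := fun u => by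
        show (Equiv.piEquivPiSubtypeProd q π).symm (u, w.2) l = _
        rw [Equiv.piEquivPiSubtypeProd_symm_apply]
        exact dif_neg hl
      rw [Function.update_of_ne hne, h1, h1]

lemma lintegral_step {aa bb : ℕ → ℕ} {n : ℕ} (t : Fin n)
    (f g : SamplePath aa bb n → ENNReal) (hf : AEMeasurable f) (hg : AEMeasurable g)
    (hsec : ∀ ω : SamplePath aa bb n,
      ∫⁻ v, f (ω.1, Function.update ω.2 t v) = ∫⁻ v, g (ω.1, Function.update ω.2 t v)) :
    ∫⁻ ω, f ω = ∫⁻ ω, g ω := by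
  obtain ⟨W, _, _, E, hE, hEs⟩ := split_exists aa bb n t
  have key : ∀ (f : SamplePath aa bb n → ENNReal), AEMeasurable f →
      ∫⁻ ω, f ω = ∫⁻ w, ∫⁻ v, f (E.symm (w, v)) := by
    intro f hf
    have h1 := hE.lintegral_comp_emb E.measurableEmbedding (fun q => f (E.symm q))
    simp only [MeasurableEquiv.symm_apply_apply] at h1
    rw [h1]
    rw [show (volume : Measure (W × (Fin (aa t.1) → ℝ))) = Measure.prod volume volume from rfl]
    exact lintegral_prod _ (hf.comp_quasiMeasurePreserving (MeasurePreserving.symm E hE).quasiMeasurePreserving)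
  calc ∫⁻ ω, f ω = ∫⁻ w, ∫⁻ v, f (E.symm (w, v)) := key f hf
    _ = ∫⁻ w, ∫⁻ v, g (E.symm (w, v)) := by
        refine lintegral_congr fun w => ?_
        calc ∫⁻ v, f (E.symm (w, v))
            = ∫⁻ v, f ((E.symm (w, 0)).1, Function.update (E.symm (w, 0)).2 t v) :=
              lintegral_congr fun v => congrArg f (hEs w v 0)
          _ = ∫⁻ v, g ((E.symm (w, 0)).1, Function.update (E.symm (w, 0)).2 t v) :=
              hsec (E.symm (w, 0))
          _ = ∫⁻ v, g (E.symm (w, v)) :=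
              (lintegral_congr fun v => congrArg g (hEs w v 0)).symm
    _ = ∫⁻ ω, g ω := (key g hg).symm

lemma integral_step {aa bb : ℕ → ℕ} {n : ℕ} (t : Fin n)
    (f g : SamplePath aa bb n → ℝ) (hf : Integrable f) (hg : Integrable g)
    (hsec : ∀ ω : SamplePath aa bb n,
      ∫ v, f (ω.1, Function.update ω.2 t v) = ∫ v, g (ω.1, Function.update ω.2 t v)) :
    ∫ ω, f ω = ∫ ω, g ω := by
  obtain ⟨W, _, _, E, hE, hEs⟩ := split_exists aa bb n t
  have key : ∀ (f : SamplePath aa bb n → ℝ), Integrable f →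
      ∫ ω, f ω = ∫ w, ∫ v, f (E.symm (w, v)) := by
    intro f hf
    have hint : Integrable (fun q => f (E.symm q)) :=
      ((MeasurePreserving.symm E hE).integrable_comp_emb E.symm.measurableEmbedding).mpr hf
    have h1 := hE.integral_comp E.measurableEmbedding (fun q => f (E.symm q))
    simp only [MeasurableEquiv.symm_apply_apply] at h1
    rw [h1]
    rw [show (volume : Measure (W × (Fin (aa t.1) → ℝ))) = Measure.prod volume volume from rfl]
    rw [show (volume : Measure (W × (Fin (aa t.1) → ℝ))) = Measure.prod volume volume from
      rfl] at hint
    exact MeasureTheory.integral_prod _ hint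
  calc ∫ ω, f ω = ∫ w, ∫ v, f (E.symm (w, v)) := key f hf
    _ = ∫ w, ∫ v, g (E.symm (w, v)) := by
        refine integral_congr_ae (Eventually.of_forall fun w => ?_)
        calc ∫ v, f (E.symm (w, v))
            = ∫ v, f ((E.symm (w, 0)).1, Function.update (E.symm (w, 0)).2 t v) :=
              integral_congr_ae (Eventually.of_forall fun v => congrArg f (hEs w v 0))
          _ = ∫ v, g ((E.symm (w, 0)).1, Function.update (E.symm (w, 0)).2 t v) :=
              hsec (E.symm (w, 0))
          _ = ∫ v, g (E.symm (w, v)) :=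
              (integral_congr_ae (Eventually.of_forall fun v => congrArg g (hEs w v 0))).symm
    _ = ∫ ω, g ω := (key g hg).symm


lemma states_measurable (kk aa bb : ℕ → ℕ) (n : ℕ) (x₀ : Fin (kk 0) → ℝ)
    (h : (i : ℕ) → (Fin (kk i) → ℝ) → (Fin (aa i) → ℝ) → (Fin (bb i) → ℝ) →
      (Fin (kk (i + 1)) → ℝ))
    (hh : ∀ i, Measurable (fun q : (Fin (kk i) → ℝ) × (Fin (aa i) → ℝ) × (Fin (bb i) → ℝ) =>
      h i q.1 q.2.1 q.2.2)) :
    ∀ i, Measurable (fun ω : SamplePath aa bb n => states kk aa bb n x₀ h ω i) := by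
  intro i
  induction i with
  | zero => exact measurable_const
  | succ i ih =>
    by_cases hi : i < n
    · have : (fun ω : SamplePath aa bb n => states kk aa bb n x₀ h ω (i+1)) =
          (fun q : (Fin (kk i) → ℝ) × (Fin (aa i) → ℝ) × (Fin (bb i) → ℝ) =>
            h i q.1 q.2.1 q.2.2) ∘
          (fun ω : SamplePath aa bb n =>
            (states kk aa bb n x₀ h ω i, ω.2 ⟨i, hi⟩, ω.1 ⟨i, hi⟩)) := by
        funext ω; simp [states, hi]
      rw [this]
      exact (hh i).comp (ih.prodMk
        (((measurable_pi_apply _).comp measurable_snd).prodMk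
          ((measurable_pi_apply _).comp measurable_fst)))
    · have : (fun ω : SamplePath aa bb n => states kk aa bb n x₀ h ω (i+1)) =
          fun _ => 0 := by funext ω; simp [states, hi]
      rw [this]; exact measurable_const

lemma states_congr (kk aa bb : ℕ → ℕ) (n : ℕ) (x₀ : Fin (kk 0) → ℝ)
    (h : (i : ℕ) → (Fin (kk i) → ℝ) → (Fin (aa i) → ℝ) → (Fin (bb i) → ℝ) →
      (Fin (kk (i + 1)) → ℝ))
    (ω ω' : SamplePath aa bb n) (hz : ω.1 = ω'.1) (c : ℕ)
    (hy : ∀ t : Fin n, t.1 < c → ω.2 t = ω'.2 t) :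
    ∀ a, a ≤ c → states kk aa bb n x₀ h ω a = states kk aa bb n x₀ h ω' a := by
  intro a
  induction a with
  | zero => intro _; rfl
  | succ a ih =>
    intro hac
    by_cases ha : a < n
    · simp only [states, dif_pos ha]
      rw [ih (by omega), hy ⟨a, ha⟩ (show a < c by omega), hz]
    · simp [states, ha]

/-- derivative of the normalization identity: the score integrates to zero. -/
lemma integral_fderiv_eq_zero {a m : ℕ} (P : (Fin a → ℝ) → (Fin m → ℝ) → ℝ)
    (hP_diff : ∀ y, Differentiable ℝ (P y))
    (hP_meas : ∀ θ', Measurable (fun y => P y θ'))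
    (hP_norm : ∀ θ', ∫ y, P y θ' = 1)
    (θ : Fin m → ℝ) (ε : ℝ) (hε : 0 < ε) (g : (Fin a → ℝ) → ℝ) (hg_int : Integrable g)
    (hg_bd : ∀ y θ', dist θ' θ < ε → ‖fderiv ℝ (P y) θ'‖ ≤ g y)
    (e : Fin m → ℝ) :
    ∫ y, fderiv ℝ (P y) θ e = 0 := by
  have hε' : 0 < ε / (‖e‖ + 1) := by positivity
  have hkey := hasDerivAt_integral_of_dominated_loc_of_deriv_le
    (F := fun s : ℝ => fun y => P y (θ + s • e))
    (F' := fun s : ℝ => fun y => fderiv ℝ (P y) (θ + s • e) e)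
    (x₀ := (0 : ℝ)) (bound := fun y => g y * ‖e‖) (μ := volume)
    (Metric.ball_mem_nhds _ hε')
    (Eventually.of_forall fun s => (hP_meas _).aestronglyMeasurable)
    (lem_integrable_of_integral_eq_one (hP_norm _))
    ?_ ?_ (hg_int.mul_const _) ?_
  · have hconst : (fun s : ℝ => ∫ y, P y (θ + s • e)) = fun _ => (1:ℝ) :=
      funext fun s => hP_norm _
    have h2 := hkey.2
    rw [hconst] at h2
    have h3 := h2.unique (hasDerivAt_const 0 1)
    rw [← h3]
    apply integral_congr_ae
    refine Eventually.of_forall fun y => ?_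
    norm_num
  · -- measurability of F' 0
    have := measurable_fderiv_apply (fun y => P y) hP_meas hP_diff (θ + (0:ℝ) • e) e
    exact this.aestronglyMeasurable
  · -- bound
    refine Eventually.of_forall fun y => fun s hs => ?_
    have hdist : dist (θ + s • e) θ < ε := by
      rw [dist_eq_norm]
      simp only [add_sub_cancel_left]
      rw [norm_smul]
      calc ‖s‖ * ‖e‖ ≤ ‖s‖ * (‖e‖ + 1) := by
            apply mul_le_mul_of_nonneg_left (by linarith) (norm_nonneg s)
        _ < (ε / (‖e‖ + 1)) * (‖e‖ + 1) := by
            apply mul_lt_mul_of_pos_right _ (by positivity)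
            simpa [Real.norm_eq_abs, Metric.mem_ball, Real.dist_eq] using hs
        _ = ε := by field_simp
    calc ‖fderiv ℝ (P y) (θ + s • e) e‖ ≤ ‖fderiv ℝ (P y) (θ + s • e)‖ * ‖e‖ :=
          ContinuousLinearMap.le_opNorm _ _
      _ ≤ g y * ‖e‖ := mul_le_mul_of_nonneg_right (hg_bd y _ hdist) (norm_nonneg e)
  · -- differentiability
    refine Eventually.of_forall fun y => fun s _ => ?_
    have h1 : HasFDerivAt (P y) (fderiv ℝ (P y) (θ + s • e)) ((fun s' : ℝ => θ + s' • e) s) :=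
      (hP_diff y _).hasFDerivAt
    have h2 : HasDerivAt (fun s' : ℝ => θ + s' • e) e s := by
      simpa using ((hasDerivAt_id s).smul_const e).const_add θ
    exact h1.comp_hasDerivAt s h2

set_option maxHeartbeats 1000000 in
/-- **Lemma 4.2: cross terms between distinct score functions vanish conditionally on the
partial sample path.**  In the chapter-4 setup (joint density
`ρ ω = μ(z)·∏ p_i(y_i | x_{i-1}, z_i, θ)`, scores `S i ω = ∇_θ log p_i(y_i | x_{i-1}, z_i, θ)`),
let `i ≠ j`, let `β` be a bounded measurable function of `ξ_i = (z₁,…,z_n, y₁,…,y_{i-1})`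
with `E[|β|·‖s_i‖·‖s_j‖] < ∞`.  Then for every bounded measurable function `w` of
`ξ_j = (z₁,…,z_n, y₁,…,y_{j-1})`, every entry `(r,c)` of the matrix
`E[w(ξ_j)·β(ξ_i)·s_i(θ)s_j(θ)^T]` vanishes; equivalently, the conditional expectation of
`β(ξ_i)·s_i(θ)s_j(θ)^T` given `ξ_j` vanishes almost surely. -/
theorem stmt_17
    (n m : ℕ) (hn : 1 ≤ n) (kk aa bb : ℕ → ℕ)
    (x₀ : Fin (kk 0) → ℝ)
    (h : (i : ℕ) → (Fin (kk i) → ℝ) → (Fin (aa i) → ℝ) → (Fin (bb i) → ℝ) →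
      (Fin (kk (i + 1)) → ℝ))
    (hh : ∀ i, Measurable (fun q : (Fin (kk i) → ℝ) × (Fin (aa i) → ℝ) × (Fin (bb i) → ℝ) =>
      h i q.1 q.2.1 q.2.2))
    (μ : ((i : Fin n) → (Fin (bb i.1) → ℝ)) → ℝ)
    (hμ0 : ∀ z, 0 ≤ μ z) (hμ1 : ∫ z, μ z = 1)
    (p : (i : ℕ) → (Fin (aa i) → ℝ) → (Fin (kk i) → ℝ) → (Fin (bb i) → ℝ) →
      (Fin m → ℝ) → ℝ)
    (hp_pos : ∀ i y xx z θ', 0 < p i y xx z θ')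
    (hp_diff : ∀ i y xx z, Differentiable ℝ (p i y xx z))
    (hp_meas : ∀ i θ', Measurable
      (fun q : (Fin (aa i) → ℝ) × (Fin (kk i) → ℝ) × (Fin (bb i) → ℝ) =>
        p i q.1 q.2.1 q.2.2 θ'))
    (hp_norm : ∀ i xx z θ', ∫ y, p i y xx z θ' = 1)
    (θ : Fin m → ℝ) (ε : ℝ) (hε : 0 < ε)
    (g : (i : ℕ) → (Fin (kk i) → ℝ) → (Fin (bb i) → ℝ) → (Fin (aa i) → ℝ) → ℝ)
    (hg_int : ∀ i xx z, Integrable (g i xx z))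
    (hg_bd : ∀ i y xx z, ∀ θ' : Fin m → ℝ, dist θ' θ < ε →
      ‖fderiv ℝ (p i y xx z) θ'‖ ≤ g i xx z y)
    (ρ : SamplePath aa bb n → ℝ)
    (hρ : ∀ ω, ρ ω =
      μ ω.1 * ∏ i : Fin n, p i.1 (ω.2 i) (states kk aa bb n x₀ h ω i.1) (ω.1 i) θ)
    (S : Fin n → SamplePath aa bb n → ((Fin m → ℝ) →L[ℝ] ℝ))
    (hS : ∀ i ω, S i ω = fderiv ℝ
      (fun t => Real.log (p i.1 (ω.2 i) (states kk aa bb n x₀ h ω i.1) (ω.1 i) t)) θ)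
    (i j : Fin n) (hij : i ≠ j)
    (β : SamplePath aa bb n → ℝ)
    (hβ_meas : Measurable β)
    (hβ_bd : ∃ C, ∀ ω, |β ω| ≤ C)
    (hβ_dep : ∀ (ω ω' : SamplePath aa bb n), ω.1 = ω'.1 →
      (∀ t : Fin n, t < i → ω.2 t = ω'.2 t) → β ω = β ω')
    (hint : Integrable (fun ω => ρ ω * (|β ω| * (‖S i ω‖ * ‖S j ω‖)))) :
    ∀ w : SamplePath aa bb n → ℝ, Measurable w → (∃ C, ∀ ω, |w ω| ≤ C) →
      (∀ (ω ω' : SamplePath aa bb n), ω.1 = ω'.1 →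
        (∀ t : Fin n, t < j → ω.2 t = ω'.2 t) → w ω = w ω') →
      ∀ r c : Fin m,
        ∫ ω, ρ ω * (w ω * β ω *
          (S i ω (Pi.single r 1) * S j ω (Pi.single c 1))) = 0 := by
  intro w hw_meas hw_bd hw_dep r c
  classical
  obtain ⟨Cw, hCw⟩ := hw_bd
  have hCw0 : 0 ≤ Cw := le_trans (abs_nonneg _) (hCw ⟨fun _ _ => 0, fun _ _ => 0⟩)
  have hμ_int : Integrable μ := lem_integrable_of_integral_eq_one hμ1
  have hXmeas := states_measurable kk aa bb n x₀ h hh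
  set P : Fin n → SamplePath aa bb n → (Fin m → ℝ) → ℝ :=
    fun l ω θ' => p l.1 (ω.2 l) (states kk aa bb n x₀ h ω l.1) (ω.1 l) θ' with hPdef
  have hP_meas : ∀ (l : Fin n) (θ' : Fin m → ℝ), Measurable (fun ω => P l ω θ') := by
    intro l θ'
    simp only [hPdef]
    exact (hp_meas l.1 θ').comp
      ((((measurable_pi_apply l).comp measurable_snd)).prodMk
        ((hXmeas l.1).prodMk ((measurable_pi_apply l).comp measurable_fst)))
  have hP_pos : ∀ (l : Fin n) ω θ', 0 < P l ω θ' := fun l ω θ' => hp_pos _ _ _ _ _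
  have hP_diff : ∀ (l : Fin n) ω, Differentiable ℝ (P l ω) := fun l ω => hp_diff _ _ _ _
  have hS_eq : ∀ (l : Fin n) (ω : SamplePath aa bb n),
      S l ω = (P l ω θ)⁻¹ • fderiv ℝ (P l ω) θ := by
    intro l ω
    rw [hS l ω]
    simp only [hPdef]
    exact HasFDerivAt.fderiv
      (HasFDerivAt.log ((hp_diff _ _ _ _ θ).hasFDerivAt) (ne_of_gt (hp_pos _ _ _ _ _)))
  have hS_apply : ∀ (l : Fin n) (ω : SamplePath aa bb n) (v : Fin m → ℝ),
      S l ω v = (P l ω θ)⁻¹ * fderiv ℝ (P l ω) θ v := by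
    intro l ω v
    rw [hS_eq l ω]
    simp
  have hS_meas : ∀ (l : Fin n) (v : Fin m → ℝ), Measurable (fun ω => S l ω v) := by
    intro l v
    simp only [hS_apply]
    exact ((hP_meas l θ).inv).mul
      (measurable_fderiv_apply (fun ω => P l ω) (hP_meas l) (fun ω => hP_diff l ω) θ v)
  have hS_bound : ∀ (l : Fin n) (ω : SamplePath aa bb n) (v : Fin m → ℝ),
      |S l ω v| ≤ ‖S l ω‖ * ‖v‖ := fun l ω v => by
    simpa [Real.norm_eq_abs] using (S l ω).le_opNorm v
  have hS_congr : ∀ (l : Fin n) (ω ω' : SamplePath aa bb n), ω.1 = ω'.1 →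
      (∀ t' : Fin n, t'.1 ≤ l.1 → ω.2 t' = ω'.2 t') → S l ω = S l ω' := by
    intro l ω ω' hz hy
    rw [hS l ω, hS l ω']
    rw [hy l le_rfl,
      states_congr kk aa bb n x₀ h ω ω' hz l.1 (fun t' ht' => hy t' (le_of_lt ht')) l.1 le_rfl,
      hz]
  set G : ℕ → Fin n → SamplePath aa bb n → ℝ :=
    fun t l ω => if l.1 < t then P l ω θ else gden (aa l.1) (ω.2 l) with hGdef
  set ρt : ℕ → SamplePath aa bb n → ℝ := fun t ω => μ ω.1 * ∏ l, G t l ω with hρtdef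
  have hρt_n : ∀ ω, ρt n ω = ρ ω := by
    intro ω
    rw [hρ ω]
    simp only [hρtdef, hGdef, hPdef]
    congr 1
    exact Finset.prod_congr rfl fun l _ => if_pos l.isLt
  have hρt_nonneg : ∀ t ω, 0 ≤ ρt t ω := by
    intro t ω
    simp only [hρtdef, hGdef]
    refine mul_nonneg (hμ0 _) (Finset.prod_nonneg fun l _ => ?_)
    split
    · exact le_of_lt (hP_pos _ _ _)
    · exact le_of_lt (gden_pos _ _)
  have haesm_μ : AEStronglyMeasurable (fun ω : SamplePath aa bb n => μ ω.1) volume := by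
    refine AEStronglyMeasurable.comp_quasiMeasurePreserving hμ_int.1 ?_
    rw [show (volume : Measure (SamplePath aa bb n)) = Measure.prod volume volume from rfl]
    exact Measure.quasiMeasurePreserving_fst
  have hG_meas : ∀ t (l : Fin n), Measurable (fun ω => G t l ω) := by
    intro t l
    simp only [hGdef]
    by_cases hlt : l.1 < t
    · simp only [if_pos hlt]; exact hP_meas l θ
    · simp only [if_neg hlt]
      exact (gden_meas _).comp ((measurable_pi_apply l).comp measurable_snd)
  have hρt_aesm : ∀ t, AEStronglyMeasurable (ρt t) volume := by
    intro t
    simp only [hρtdef]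
    exact haesm_μ.mul
      (Finset.measurable_prod Finset.univ (fun l _ => hG_meas t l)).aestronglyMeasurable
  -- the main argument
  have MAIN : ∀ (k l0 : Fin n), l0 < k → ∀ (ek e0 : Fin m → ℝ)
      (B : SamplePath aa bb n → ℝ), Measurable B →
      (∀ ω ω' : SamplePath aa bb n, ω.1 = ω'.1 →
        (∀ t' : Fin n, t' < k → ω.2 t' = ω'.2 t') → B ω = B ω') →
      Integrable (fun ω => ρt n ω * (|B ω| * (|S l0 ω e0| * |S k ω ek|))) →
      ∫ ω, ρt n ω * (B ω * (S l0 ω e0 * S k ω ek)) = 0 := by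
    intro k l0 hl0k ek e0 B hB_meas hB_congr hintB
    set F : SamplePath aa bb n → ℝ := fun ω => B ω * (S l0 ω e0 * S k ω ek) with hFdef
    set ft : ℕ → SamplePath aa bb n → ℝ := fun t ω => ρt t ω * F ω with hftdef
    have hF_meas : Measurable F := by
      simp only [hFdef]
      exact hB_meas.mul ((hS_meas l0 e0).mul (hS_meas k ek))
    have hft_aesm : ∀ t, AEStronglyMeasurable (ft t) volume := by
      intro t
      simp only [hftdef]
      exact (hρt_aesm t).mul hF_meas.aestronglyMeasurable
    have hft_n_int : Integrable (ft n) := by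
      refine hintB.mono' (hft_aesm n) (Eventually.of_forall fun ω => ?_)
      simp only [hftdef, hFdef, Real.norm_eq_abs]
      rw [abs_mul, abs_of_nonneg (hρt_nonneg n ω)]
      refine mul_le_mul_of_nonneg_left (le_of_eq ?_) (hρt_nonneg n ω)
      rw [abs_mul, abs_mul]
    -- state-congruence for updates
    have hupd : ∀ (tf : Fin n) (ω : SamplePath aa bb n) v (a : ℕ), a ≤ tf.1 →
        states kk aa bb n x₀ h (ω.1, Function.update ω.2 tf v) a =
          states kk aa bb n x₀ h ω a := by
      intro tf ω v a ha
      refine states_congr kk aa bb n x₀ h (ω.1, Function.update ω.2 tf v) ω rfl tf.1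
        (fun t' ht' => ?_) a ha
      show Function.update ω.2 tf v t' = ω.2 t'
      exact Function.update_of_ne (Fin.ne_of_val_ne (Nat.ne_of_lt ht')) v ω.2
    -- section computation for the density part
    have hRsec1 : ∀ (tf : Fin n) (ω : SamplePath aa bb n) v,
        ρt (tf.1+1) (ω.1, Function.update ω.2 tf v) =
          p tf.1 v (states kk aa bb n x₀ h ω tf.1) (ω.1 tf) θ *
            (μ ω.1 * ∏ l ∈ Finset.univ.erase tf, G tf.1 l ω) := by
      intro tf ω v
      simp only [hρtdef]
      rw [← Finset.mul_prod_erase Finset.univ _ (Finset.mem_univ tf)]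
      have h1 : G (tf.1+1) tf ((ω.1, Function.update ω.2 tf v) : SamplePath aa bb n) =
          p tf.1 v (states kk aa bb n x₀ h ω tf.1) (ω.1 tf) θ := by
        simp only [hGdef, hPdef]
        rw [if_pos (Nat.lt_succ_self tf.1)]
        show p tf.1 (Function.update ω.2 tf v tf) _ (ω.1 tf) θ = _
        rw [Function.update_self, hupd tf ω v tf.1 le_rfl]
      have h2 : ∀ l ∈ Finset.univ.erase tf,
          G (tf.1+1) l ((ω.1, Function.update ω.2 tf v) : SamplePath aa bb n) = G tf.1 l ω := by
        intro l hl
        have hlne : l ≠ tf := (Finset.mem_erase.mp hl).1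
        have hlv : l.1 ≠ tf.1 := fun hh => hlne (Fin.ext hh)
        simp only [hGdef, hPdef]
        by_cases hlt : l.1 < tf.1
        · rw [if_pos (by omega : l.1 < tf.1 + 1), if_pos hlt]
          show p l.1 (Function.update ω.2 tf v l) _ (ω.1 l) θ = _
          rw [Function.update_of_ne hlne, hupd tf ω v l.1 (le_of_lt hlt)]
        · rw [if_neg (by omega : ¬ l.1 < tf.1 + 1), if_neg hlt]
          show gden (aa l.1) (Function.update ω.2 tf v l) = _
          rw [Function.update_of_ne hlne]
      rw [Finset.prod_congr rfl h2, h1]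
      show μ ω.1 * _ = _
      ring
    have hRsec2 : ∀ (tf : Fin n) (ω : SamplePath aa bb n) v,
        ρt tf.1 (ω.1, Function.update ω.2 tf v) =
          gden (aa tf.1) v * (μ ω.1 * ∏ l ∈ Finset.univ.erase tf, G tf.1 l ω) := by
      intro tf ω v
      simp only [hρtdef]
      rw [← Finset.mul_prod_erase Finset.univ _ (Finset.mem_univ tf)]
      have h1 : G tf.1 tf ((ω.1, Function.update ω.2 tf v) : SamplePath aa bb n) =
          gden (aa tf.1) v := by
        simp only [hGdef]
        rw [if_neg (lt_irrefl tf.1)]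
        show gden (aa tf.1) (Function.update ω.2 tf v tf) = _
        rw [Function.update_self]
      have h2 : ∀ l ∈ Finset.univ.erase tf,
          G tf.1 l ((ω.1, Function.update ω.2 tf v) : SamplePath aa bb n) = G tf.1 l ω := by
        intro l hl
        have hlne : l ≠ tf := (Finset.mem_erase.mp hl).1
        simp only [hGdef, hPdef]
        by_cases hlt : l.1 < tf.1
        · rw [if_pos hlt, if_pos hlt]
          show p l.1 (Function.update ω.2 tf v l) _ (ω.1 l) θ = _
          rw [Function.update_of_ne hlne, hupd tf ω v l.1 (le_of_lt hlt)]
        · rw [if_neg hlt, if_neg hlt]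
          show gden (aa l.1) (Function.update ω.2 tf v l) = _
          rw [Function.update_of_ne hlne]
      rw [Finset.prod_congr rfl h2, h1]
      show μ ω.1 * _ = _
      ring
    have hFsec : ∀ (tf : Fin n), k.1 < tf.1 → ∀ (ω : SamplePath aa bb n) v,
        F (ω.1, Function.update ω.2 tf v) = F ω := by
      intro tf hkt ω v
      have hcoords : ∀ t' : Fin n, t'.1 ≤ k.1 →
          Function.update ω.2 tf v t' = ω.2 t' := fun t' ht' =>
        Function.update_of_ne (Fin.ne_of_val_ne (by omega)) v ω.2
      have hB : B ((ω.1, Function.update ω.2 tf v) : SamplePath aa bb n) = B ω :=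
        (hB_congr ω (ω.1, Function.update ω.2 tf v) rfl
          fun t' ht' => (hcoords t' (le_of_lt ht')).symm).symm
      have hS1 : S l0 ((ω.1, Function.update ω.2 tf v) : SamplePath aa bb n) = S l0 ω :=
        (hS_congr l0 ω (ω.1, Function.update ω.2 tf v) rfl
          fun t' ht' => (hcoords t' (le_trans ht' (le_of_lt hl0k))).symm).symm
      have hS2 : S k ((ω.1, Function.update ω.2 tf v) : SamplePath aa bb n) = S k ω :=
        (hS_congr k ω (ω.1, Function.update ω.2 tf v) rfl
          fun t' ht' => (hcoords t' ht').symm).symm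
      simp only [hFdef]
      rw [hB, hS1, hS2]
    -- downward step
    have step : ∀ tf : Fin n, k.1 < tf.1 → Integrable (ft (tf.1+1)) →
        Integrable (ft tf.1) ∧ ∫ ω, ft tf.1 ω = ∫ ω, ft (tf.1+1) ω := by
      intro tf hkt h1
      have s1 : ∀ (ω : SamplePath aa bb n) v,
          ft (tf.1+1) (ω.1, Function.update ω.2 tf v) =
          p tf.1 v (states kk aa bb n x₀ h ω tf.1) (ω.1 tf) θ *
            ((μ ω.1 * ∏ l ∈ Finset.univ.erase tf, G tf.1 l ω) * F ω) := by
        intro ω v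
        simp only [hftdef]
        rw [hRsec1 tf ω v, hFsec tf hkt ω v]
        ring
      have s2 : ∀ (ω : SamplePath aa bb n) v,
          ft tf.1 (ω.1, Function.update ω.2 tf v) =
          gden (aa tf.1) v *
            ((μ ω.1 * ∏ l ∈ Finset.univ.erase tf, G tf.1 l ω) * F ω) := by
        intro ω v
        simp only [hftdef]
        rw [hRsec2 tf ω v, hFsec tf hkt ω v]
        ring
      have hp_measv : ∀ (ω : SamplePath aa bb n),
          Measurable (fun v => p tf.1 v (states kk aa bb n x₀ h ω tf.1) (ω.1 tf) θ) :=
        fun ω => (hp_meas tf.1 θ).comp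
          (measurable_id.prodMk (measurable_const.prodMk measurable_const))
      have hsecl : ∀ ω : SamplePath aa bb n,
          ∫⁻ v, ((‖ft tf.1 (ω.1, Function.update ω.2 tf v)‖₊ : NNReal) : ENNReal) =
          ∫⁻ v, ((‖ft (tf.1+1) (ω.1, Function.update ω.2 tf v)‖₊ : NNReal) : ENNReal) := by
        intro ω
        calc ∫⁻ v, ((‖ft tf.1 (ω.1, Function.update ω.2 tf v)‖₊ : NNReal) : ENNReal)
            = ∫⁻ v, ENNReal.ofReal (gden (aa tf.1) v) *
                ((‖(μ ω.1 * ∏ l ∈ Finset.univ.erase tf, G tf.1 l ω) * F ω‖₊ : NNReal) :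
                  ENNReal) := by
              refine lintegral_congr fun v => ?_
              conv_lhs => rw [s2 ω v, nnnorm_mul, ENNReal.coe_mul]
              congr 1
              exact Real.enorm_eq_ofReal (le_of_lt (gden_pos _ _))
          _ = 1 * ((‖(μ ω.1 * ∏ l ∈ Finset.univ.erase tf, G tf.1 l ω) * F ω‖₊ : NNReal) :
                ENNReal) := by
              rw [lintegral_mul_const _ ((gden_meas _).ennreal_ofReal),
                lintegral_ofReal_eq_one (fun v => le_of_lt (gden_pos _ _)) (gden_integral _)]
          _ = (∫⁻ v, ENNReal.ofReal (p tf.1 v (states kk aa bb n x₀ h ω tf.1) (ω.1 tf) θ)) *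
                ((‖(μ ω.1 * ∏ l ∈ Finset.univ.erase tf, G tf.1 l ω) * F ω‖₊ : NNReal) :
                  ENNReal) := by
              rw [lintegral_ofReal_eq_one (fun v => le_of_lt (hp_pos _ _ _ _ _))
                (hp_norm tf.1 _ _ θ)]
          _ = ∫⁻ v, ENNReal.ofReal (p tf.1 v (states kk aa bb n x₀ h ω tf.1) (ω.1 tf) θ) *
                ((‖(μ ω.1 * ∏ l ∈ Finset.univ.erase tf, G tf.1 l ω) * F ω‖₊ : NNReal) :
                  ENNReal) :=
              (lintegral_mul_const _ ((hp_measv ω).ennreal_ofReal)).symm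
          _ = ∫⁻ v, ((‖ft (tf.1+1) (ω.1, Function.update ω.2 tf v)‖₊ : NNReal) : ENNReal) := by
              refine lintegral_congr fun v => ?_
              conv_rhs => rw [s1 ω v, nnnorm_mul, ENNReal.coe_mul]
              congr 1
              exact (Real.enorm_eq_ofReal (le_of_lt (hp_pos _ _ _ _ _))).symm
      have hl := lintegral_step tf
        (fun ω => ((‖ft tf.1 ω‖₊ : NNReal) : ENNReal))
        (fun ω => ((‖ft (tf.1+1) ω‖₊ : NNReal) : ENNReal))
        (hft_aesm tf.1).enorm (hft_aesm (tf.1+1)).enorm hsecl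
      have hint2 : Integrable (ft tf.1) := by
        refine ⟨hft_aesm tf.1, ?_⟩
        have hfin := h1.2
        unfold HasFiniteIntegral at hfin ⊢
        exact lt_of_eq_of_lt hl hfin
      refine ⟨hint2, ?_⟩
      refine integral_step tf (ft tf.1) (ft (tf.1+1)) hint2 h1 fun ω => ?_
      calc ∫ v, ft tf.1 (ω.1, Function.update ω.2 tf v)
          = ∫ v, gden (aa tf.1) v *
              ((μ ω.1 * ∏ l ∈ Finset.univ.erase tf, G tf.1 l ω) * F ω) :=
            integral_congr_ae (Eventually.of_forall fun v => s2 ω v)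
        _ = (μ ω.1 * ∏ l ∈ Finset.univ.erase tf, G tf.1 l ω) * F ω := by
            rw [integral_mul_const, gden_integral, one_mul]
        _ = ∫ v, p tf.1 v (states kk aa bb n x₀ h ω tf.1) (ω.1 tf) θ *
              ((μ ω.1 * ∏ l ∈ Finset.univ.erase tf, G tf.1 l ω) * F ω) := by
            rw [integral_mul_const, hp_norm, one_mul]
        _ = ∫ v, ft (tf.1+1) (ω.1, Function.update ω.2 tf v) :=
            integral_congr_ae (Eventually.of_forall fun v => (s1 ω v).symm)
    -- iterate the step down from n to k+1
    have chain : ∀ d : ℕ, k.1 + 1 + d ≤ n →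
        Integrable (ft (n - d)) ∧ ∫ ω, ft (n - d) ω = ∫ ω, ft n ω := by
      intro d
      induction d with
      | zero => intro _; rw [Nat.sub_zero]; exact ⟨hft_n_int, rfl⟩
      | succ d ih =>
        intro hd
        obtain ⟨ih1, ih2⟩ := ih (by omega)
        have ht : n - (d+1) < n := by omega
        have hkt : k.1 < n - (d+1) := by omega
        have h1'' : Integrable (ft (n - (d+1) + 1)) := by
          rwa [show n - (d+1) + 1 = n - d by omega]
        have h1' : Integrable (ft ((⟨n - (d+1), ht⟩ : Fin n).1 + 1)) := h1''
        obtain ⟨hstep1, hstep2⟩ := step ⟨n - (d+1), ht⟩ hkt h1'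
        have hstep1' : Integrable (ft (n - (d+1))) := hstep1
        have hstep2' : ∫ ω, ft (n - (d+1)) ω = ∫ ω, ft (n - (d+1) + 1) ω := hstep2
        refine ⟨hstep1', ?_⟩
        rw [hstep2', show n - (d+1) + 1 = n - d by omega, ih2]
    have hk1n : k.1 + 1 ≤ n := k.isLt
    obtain ⟨hint_k1, heq_k1⟩ := chain (n - (k.1+1)) (by omega)
    rw [show n - (n - (k.1+1)) = k.1 + 1 by omega] at hint_k1 heq_k1
    -- final step: the inner integral vanishes
    have hzero_sec : ∀ ω : SamplePath aa bb n,
        ∫ v, ft (k.1 + 1) (ω.1, Function.update ω.2 k v) = 0 := by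
      intro ω
      have hFk : ∀ v, F (ω.1, Function.update ω.2 k v) =
          B ω * (S l0 ω e0 *
            ((p k.1 v (states kk aa bb n x₀ h ω k.1) (ω.1 k) θ)⁻¹ *
              fderiv ℝ (p k.1 v (states kk aa bb n x₀ h ω k.1) (ω.1 k)) θ ek)) := by
        intro v
        have hcoords : ∀ t' : Fin n, t'.1 < k.1 →
            Function.update ω.2 k v t' = ω.2 t' := fun t' ht' =>
          Function.update_of_ne (Fin.ne_of_val_ne (by omega)) v ω.2
        have hB : B ((ω.1, Function.update ω.2 k v) : SamplePath aa bb n) = B ω :=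
          (hB_congr ω (ω.1, Function.update ω.2 k v) rfl
            fun t' ht' => (hcoords t' ht').symm).symm
        have hS1 : S l0 ((ω.1, Function.update ω.2 k v) : SamplePath aa bb n) = S l0 ω :=
          (hS_congr l0 ω (ω.1, Function.update ω.2 k v) rfl
            fun t' ht' => (hcoords t' (lt_of_le_of_lt ht' hl0k)).symm).symm
        have hPk : P k ((ω.1, Function.update ω.2 k v) : SamplePath aa bb n) =
            fun θ' => p k.1 v (states kk aa bb n x₀ h ω k.1) (ω.1 k) θ' := by
          funext θ'
          simp only [hPdef]
          show p k.1 (Function.update ω.2 k v k) _ (ω.1 k) θ' = _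
          rw [Function.update_self,
            states_congr kk aa bb n x₀ h (ω.1, Function.update ω.2 k v) ω rfl k.1
              (fun t' ht' => hcoords t' ht') k.1 le_rfl]
        have hSk : S k ((ω.1, Function.update ω.2 k v) : SamplePath aa bb n) ek =
            (p k.1 v (states kk aa bb n x₀ h ω k.1) (ω.1 k) θ)⁻¹ *
              fderiv ℝ (p k.1 v (states kk aa bb n x₀ h ω k.1) (ω.1 k)) θ ek := by
          rw [hS_apply k ((ω.1, Function.update ω.2 k v) : SamplePath aa bb n), hPk]
        simp only [hFdef]
        rw [hB, hS1, hSk]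
      have s3 : ∀ v, ft (k.1+1) (ω.1, Function.update ω.2 k v) =
          ((μ ω.1 * ∏ l ∈ Finset.univ.erase k, G k.1 l ω) * (B ω * S l0 ω e0)) *
            fderiv ℝ (p k.1 v (states kk aa bb n x₀ h ω k.1) (ω.1 k)) θ ek := by
        intro v
        have hpne : p k.1 v (states kk aa bb n x₀ h ω k.1) (ω.1 k) θ ≠ 0 :=
          ne_of_gt (hp_pos _ _ _ _ _)
        simp only [hftdef]
        rw [hRsec1 k ω v, hFk v]
        field_simp
      calc ∫ v, ft (k.1 + 1) (ω.1, Function.update ω.2 k v)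
          = ∫ v, ((μ ω.1 * ∏ l ∈ Finset.univ.erase k, G k.1 l ω) * (B ω * S l0 ω e0)) *
              fderiv ℝ (p k.1 v (states kk aa bb n x₀ h ω k.1) (ω.1 k)) θ ek :=
            integral_congr_ae (Eventually.of_forall fun v => s3 v)
        _ = 0 := by
            rw [integral_const_mul,
              integral_fderiv_eq_zero
                (fun v θ' => p k.1 v (states kk aa bb n x₀ h ω k.1) (ω.1 k) θ')
                (fun v => hp_diff _ _ _ _)
                (fun θ' => (hp_meas k.1 θ').comp
                  (measurable_id.prodMk (measurable_const.prodMk measurable_const)))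
                (fun θ' => hp_norm k.1 _ _ θ')
                θ ε hε (g k.1 (states kk aa bb n x₀ h ω k.1) (ω.1 k))
                (hg_int k.1 _ _)
                (fun y θ' hd => hg_bd k.1 y _ _ θ' hd) ek,
              mul_zero]
    have hfinal : ∫ ω, ft (k.1+1) ω = 0 := by
      have h0 := integral_step k (ft (k.1+1)) (fun _ => (0:ℝ)) hint_k1
        (integrable_zero _ _ _) (fun ω => by rw [hzero_sec ω]; simp)
      simpa using h0
    calc ∫ ω, ρt n ω * (B ω * (S l0 ω e0 * S k ω ek))
        = ∫ ω, ft n ω := by simp only [hftdef, hFdef]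
      _ = ∫ ω, ft (k.1+1) ω := heq_k1.symm
      _ = 0 := hfinal
  -- apply MAIN in the two cases
  have her : ‖(Pi.single r 1 : Fin m → ℝ)‖ = 1 := by
    rw [Pi.norm_single]; exact norm_one
  have hec : ‖(Pi.single c 1 : Fin m → ℝ)‖ = 1 := by
    rw [Pi.norm_single]; exact norm_one
  have hb3 : ∀ ω : SamplePath aa bb n, |w ω * β ω| ≤ Cw * |β ω| := fun ω => by
    rw [abs_mul]; exact mul_le_mul_of_nonneg_right (hCw ω) (abs_nonneg _)
  have hρ0 : ∀ ω : SamplePath aa bb n, 0 ≤ ρ ω := fun ω => by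
    rw [← hρt_n ω]; exact hρt_nonneg n ω
  have hb1 : ∀ ω : SamplePath aa bb n, |S i ω (Pi.single r 1)| ≤ ‖S i ω‖ := fun ω => by
    have := hS_bound i ω (Pi.single r 1); rwa [her, mul_one] at this
  have hb2 : ∀ ω : SamplePath aa bb n, |S j ω (Pi.single c 1)| ≤ ‖S j ω‖ := fun ω => by
    have := hS_bound j ω (Pi.single c 1); rwa [hec, mul_one] at this
  rcases lt_or_gt_of_ne hij with hij' | hij'
  · have hint' : Integrable (fun ω => ρt n ω *
        (|w ω * β ω| * (|S i ω (Pi.single r 1)| * |S j ω (Pi.single c 1)|))) := by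
      refine (hint.const_mul Cw).mono'
        ((hρt_aesm n).mul ((((hw_meas.mul hβ_meas).abs).mul
          (((hS_meas i (Pi.single r 1)).abs).mul
            ((hS_meas j (Pi.single c 1)).abs))).aestronglyMeasurable))
        (Eventually.of_forall fun ω => ?_)
      have h0 : (0:ℝ) ≤ ρt n ω * (|w ω * β ω| *
          (|S i ω (Pi.single r 1)| * |S j ω (Pi.single c 1)|)) :=
        mul_nonneg (hρt_nonneg n ω) (mul_nonneg (abs_nonneg _)
          (mul_nonneg (abs_nonneg _) (abs_nonneg _)))
      rw [Real.norm_eq_abs, abs_of_nonneg h0, hρt_n ω]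
      calc ρ ω * (|w ω * β ω| * (|S i ω (Pi.single r 1)| * |S j ω (Pi.single c 1)|))
          ≤ ρ ω * ((Cw * |β ω|) * (‖S i ω‖ * ‖S j ω‖)) := by
            refine mul_le_mul_of_nonneg_left ?_ (hρ0 ω)
            refine mul_le_mul (hb3 ω) ?_ (mul_nonneg (abs_nonneg _) (abs_nonneg _))
              (mul_nonneg hCw0 (abs_nonneg _))
            exact mul_le_mul (hb1 ω) (hb2 ω) (abs_nonneg _) (norm_nonneg _)
        _ = Cw * (ρ ω * (|β ω| * (‖S i ω‖ * ‖S j ω‖))) := by ring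
    have hMB : ∀ ω ω' : SamplePath aa bb n, ω.1 = ω'.1 →
        (∀ t' : Fin n, t' < j → ω.2 t' = ω'.2 t') →
        w ω * β ω = w ω' * β ω' := by
      intro ω ω' hz hy
      rw [hw_dep ω ω' hz hy, hβ_dep ω ω' hz fun t' ht' => hy t' (lt_trans ht' hij')]
    have hres := MAIN j i hij' (Pi.single c 1) (Pi.single r 1)
      (fun ω => w ω * β ω) (hw_meas.mul hβ_meas) hMB hint'
    calc ∫ ω, ρ ω * (w ω * β ω * (S i ω (Pi.single r 1) * S j ω (Pi.single c 1)))
        = ∫ ω, ρt n ω * ((w ω * β ω) * (S i ω (Pi.single r 1) * S j ω (Pi.single c 1))) :=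
          integral_congr_ae (Eventually.of_forall fun ω => by simp only [hρt_n])
      _ = 0 := hres
  · have hint' : Integrable (fun ω => ρt n ω *
        (|w ω * β ω| * (|S j ω (Pi.single c 1)| * |S i ω (Pi.single r 1)|))) := by
      refine (hint.const_mul Cw).mono'
        ((hρt_aesm n).mul ((((hw_meas.mul hβ_meas).abs).mul
          (((hS_meas j (Pi.single c 1)).abs).mul
            ((hS_meas i (Pi.single r 1)).abs))).aestronglyMeasurable))
        (Eventually.of_forall fun ω => ?_)
      have h0 : (0:ℝ) ≤ ρt n ω * (|w ω * β ω| *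
          (|S j ω (Pi.single c 1)| * |S i ω (Pi.single r 1)|)) :=
        mul_nonneg (hρt_nonneg n ω) (mul_nonneg (abs_nonneg _)
          (mul_nonneg (abs_nonneg _) (abs_nonneg _)))
      rw [Real.norm_eq_abs, abs_of_nonneg h0, hρt_n ω]
      calc ρ ω * (|w ω * β ω| * (|S j ω (Pi.single c 1)| * |S i ω (Pi.single r 1)|))
          ≤ ρ ω * ((Cw * |β ω|) * (‖S j ω‖ * ‖S i ω‖)) := by
            refine mul_le_mul_of_nonneg_left ?_ (hρ0 ω)
            refine mul_le_mul (hb3 ω) ?_ (mul_nonneg (abs_nonneg _) (abs_nonneg _))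
              (mul_nonneg hCw0 (abs_nonneg _))
            exact mul_le_mul (hb2 ω) (hb1 ω) (abs_nonneg _) (norm_nonneg _)
        _ = Cw * (ρ ω * (|β ω| * (‖S i ω‖ * ‖S j ω‖))) := by ring
    have hMB : ∀ ω ω' : SamplePath aa bb n, ω.1 = ω'.1 →
        (∀ t' : Fin n, t' < i → ω.2 t' = ω'.2 t') →
        w ω * β ω = w ω' * β ω' := by
      intro ω ω' hz hy
      rw [hw_dep ω ω' hz fun t' ht' => hy t' (lt_trans ht' hij'), hβ_dep ω ω' hz hy]
    have hres := MAIN i j hij' (Pi.single r 1) (Pi.single c 1)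
      (fun ω => w ω * β ω) (hw_meas.mul hβ_meas) hMB hint'
    calc ∫ ω, ρ ω * (w ω * β ω * (S i ω (Pi.single r 1) * S j ω (Pi.single c 1)))
        = ∫ ω, ρt n ω * ((w ω * β ω) * (S j ω (Pi.single c 1) * S i ω (Pi.single r 1))) :=
          integral_congr_ae (Eventually.of_forall fun ω => by simp only [hρt_n]; ring)
      _ = 0 := hres
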